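/- Let π : (Y, ψ) → (X, φ) be an s-bijective factor map between Smale spaces. Then π is a local homeomorphism from local stable sets of Y to local stable sets of X: for every y ∈ Y there exist ε, ε' > 0 such that π restricted to Y^s(y, ε) is a homeomorphism onto a subset of X^s(π(y), ε') that contains X^s(π(y), ε'') for some ε'' > 0. -/

import Mathlib

open Filter Topology Set

/-- A Smale space structure on a compact metric space. -/
structure SmaleSpace (X : Type) [MetricSpace X] : Type where
  compact : CompactSpace X
  phi : X ≃ₜ X
  eps : ℝ
  eps_pos : 0 < eps
  lam : ℝ
  lam_pos : 0 < lam
  lam_lt_one : lam < 1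
  bracket : X → X → X
  bracket_cont : ContinuousOn (fun p : X × X => bracket p.1 p.2) {p | dist p.1 p.2 ≤ eps}
  bracket_self : ∀ x, bracket x x = x
  bracket_eq₁ : ∀ x y z, dist x y ≤ eps → dist y z ≤ eps → dist x z ≤ eps →
    bracket x (bracket y z) = bracket x z
  bracket_eq₂ : ∀ x y z, dist x y ≤ eps → dist y z ≤ eps → dist x z ≤ eps →
    bracket (bracket x y) z = bracket x z
  bracket_phi : ∀ x y, dist x y ≤ eps → dist (phi x) (phi y) ≤ eps →
    phi (bracket x y) = bracket (phi x) (phi y)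
  contract_s : ∀ x y z, dist x y ≤ eps → bracket x y = y → dist x z ≤ eps → bracket x z = z →
    dist (phi y) (phi z) ≤ lam * dist y z
  contract_u : ∀ x y z, dist x y ≤ eps → bracket y x = y → dist x z ≤ eps → bracket z x = z →
    dist (phi.symm y) (phi.symm z) ≤ lam * dist y z

namespace SmaleSpace

variable {X : Type} [MetricSpace X]

/-- The local stable set `X^s(x, ε)`. -/
def locStable (S : SmaleSpace X) (x : X) (ε : ℝ) : Set X :=
  {y | dist x y ≤ ε ∧ S.bracket x y = y}

/-- The local unstable set `X^u(x, ε)`. -/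
def locUnstable (S : SmaleSpace X) (x : X) (ε : ℝ) : Set X :=
  {y | dist x y ≤ ε ∧ S.bracket y x = y}

end SmaleSpace

/-- Stable equivalence: the forward orbits are asymptotic. -/
def StableEquiv {X : Type} [MetricSpace X] (φ : X → X) (x y : X) : Prop :=
  Tendsto (fun n : ℕ => dist (φ^[n] x) (φ^[n] y)) atTop (𝓝 0)

/-- Unstable equivalence: the backward orbits are asymptotic. -/
def UnstableEquiv {X : Type} [MetricSpace X] (φ : X ≃ₜ X) (x y : X) : Prop :=
  Tendsto (fun n : ℕ => dist ((φ.symm : X → X)^[n] x) ((φ.symm : X → X)^[n] y)) atTop (𝓝 0)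

/-- A point-free formulation of non-wandering: every point is non-wandering. -/
def NonWandering {X : Type} [TopologicalSpace X] (φ : X → X) : Prop :=
  ∀ x : X, ∀ U ∈ 𝓝 x, ∃ n : ℕ, 1 ≤ n ∧ (φ^[n] '' U ∩ U).Nonempty

/-- A factor map between topological dynamical systems. -/
structure IsFactorMap {Y X : Type} [TopologicalSpace Y] [TopologicalSpace X]
    (ψ : Y ≃ₜ Y) (φ : X ≃ₜ X) (π : Y → X) : Prop where
  continuous : Continuous π
  surjective : Function.Surjective π
  semiconj : ∀ y, π (ψ y) = φ (π y)

/-- An `s`-resolving factor map: injective on stable equivalence classes. -/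
structure IsSResolving {Y X : Type} [MetricSpace Y] [MetricSpace X]
    (ψ : Y ≃ₜ Y) (φ : X ≃ₜ X) (π : Y → X) extends IsFactorMap ψ φ π : Prop where
  inj : ∀ y : Y, Set.InjOn π {y' | StableEquiv (⇑ψ) y y'}

/-- A `u`-resolving factor map: injective on unstable equivalence classes. -/
structure IsUResolving {Y X : Type} [MetricSpace Y] [MetricSpace X]
    (ψ : Y ≃ₜ Y) (φ : X ≃ₜ X) (π : Y → X) extends IsFactorMap ψ φ π : Prop where
  inj : ∀ y : Y, Set.InjOn π {y' | UnstableEquiv ψ y y'}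

/-- An `s`-bijective factor map: bijective from each stable class onto that of the image. -/
structure IsSBij {Y X : Type} [MetricSpace Y] [MetricSpace X]
    (ψ : Y ≃ₜ Y) (φ : X ≃ₜ X) (π : Y → X) extends IsFactorMap ψ φ π : Prop where
  bij : ∀ y : Y, Set.BijOn π {y' | StableEquiv (⇑ψ) y y'} {x | StableEquiv (⇑φ) (π y) x}

/-- A `u`-bijective factor map: bijective from each unstable class onto that of the image. -/
structure IsUBij {Y X : Type} [MetricSpace Y] [MetricSpace X]
    (ψ : Y ≃ₜ Y) (φ : X ≃ₜ X) (π : Y → X) extends IsFactorMap ψ φ π : Prop where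
  bij : ∀ y : Y, Set.BijOn π {y' | UnstableEquiv ψ y y'} {x | UnstableEquiv φ (π y) x}

namespace SmaleSpace

variable {X : Type} [MetricSpace X]

lemma eps_nonneg (S : SmaleSpace X) : 0 ≤ S.eps := S.eps_pos.le

lemma pow_lam_le_one (S : SmaleSpace X) (n : ℕ) : S.lam ^ n ≤ 1 :=
  pow_le_one₀ S.lam_pos.le S.lam_lt_one.le

lemma pow_lam_nonneg (S : SmaleSpace X) (n : ℕ) : 0 ≤ S.lam ^ n :=
  pow_nonneg S.lam_pos.le n

lemma iter_mem (S : SmaleSpace X) {a b : X} {ε : ℝ} (hεe : ε ≤ S.eps)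
    (h : b ∈ S.locStable a ε) (n : ℕ) :
    dist ((⇑S.phi)^[n] a) ((⇑S.phi)^[n] b) ≤ S.lam ^ n * ε ∧
      S.bracket ((⇑S.phi)^[n] a) ((⇑S.phi)^[n] b) = (⇑S.phi)^[n] b := by
  have hε0 : 0 ≤ ε := le_trans dist_nonneg h.1
  induction n with
  | zero =>
    refine ⟨by simpa using h.1, by simpa using h.2⟩
  | succ n ih =>
    obtain ⟨hd, hb⟩ := ih
    have hlam : S.lam ^ n * ε ≤ ε := by nlinarith [S.pow_lam_le_one n]
    have hde : dist ((⇑S.phi)^[n] a) ((⇑S.phi)^[n] b) ≤ S.eps :=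
      le_trans hd (le_trans hlam hεe)
    have hc := S.contract_s ((⇑S.phi)^[n] a) ((⇑S.phi)^[n] a) ((⇑S.phi)^[n] b)
      (by simpa using S.eps_nonneg) (S.bracket_self _) hde hb
    have hd' : dist ((⇑S.phi)^[n+1] a) ((⇑S.phi)^[n+1] b) ≤ S.lam ^ (n+1) * ε := by
      rw [Function.iterate_succ_apply', Function.iterate_succ_apply']
      calc dist (S.phi ((⇑S.phi)^[n] a)) (S.phi ((⇑S.phi)^[n] b))
          ≤ S.lam * dist ((⇑S.phi)^[n] a) ((⇑S.phi)^[n] b) := hc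
        _ ≤ S.lam * (S.lam ^ n * ε) := by nlinarith [S.lam_pos]
        _ = S.lam ^ (n+1) * ε := by ring
    refine ⟨hd', ?_⟩
    have hde' : dist ((⇑S.phi)^[n+1] a) ((⇑S.phi)^[n+1] b) ≤ S.eps :=
      le_trans hd' (by nlinarith [S.pow_lam_le_one (n+1)])
    rw [Function.iterate_succ_apply', Function.iterate_succ_apply'] at hde' ⊢
    rw [← S.bracket_phi _ _ hde hde', hb]

lemma stableEquiv_of_locStable (S : SmaleSpace X) {a b : X} {ε : ℝ} (hεe : ε ≤ S.eps)
    (h : b ∈ S.locStable a ε) : StableEquiv (⇑S.phi) a b := by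
  have h0 : Tendsto (fun n : ℕ => S.lam ^ n * ε) atTop (𝓝 0) := by
    simpa using (tendsto_pow_atTop_nhds_zero_of_lt_one S.lam_pos.le S.lam_lt_one).mul_const ε
  exact squeeze_zero (fun n => dist_nonneg) (fun n => (S.iter_mem hεe h n).1) h0

/-- If all forward iterates stay `δ`-close, then the bracket relation holds. -/
lemma shadow (S : SmaleSpace X) :
    ∃ δ, 0 < δ ∧ δ ≤ S.eps ∧ ∀ a b : X,
      (∀ n : ℕ, dist ((⇑S.phi)^[n] a) ((⇑S.phi)^[n] b) ≤ δ) → S.bracket a b = b := by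
  haveI := S.compact
  have hKcl : IsClosed {p : X × X | dist p.1 p.2 ≤ S.eps} :=
    isClosed_le (continuous_fst.dist continuous_snd) continuous_const
  have hUC := (hKcl.isCompact).uniformContinuousOn_of_continuous S.bracket_cont
  rw [Metric.uniformContinuousOn_iff] at hUC
  obtain ⟨δ', hδ'pos, hδ'⟩ := hUC (S.eps/2) (half_pos S.eps_pos)
  refine ⟨min (δ'/2) (S.eps/2), lt_min (half_pos hδ'pos) (half_pos S.eps_pos),
    le_trans (min_le_right _ _) (by linarith [S.eps_pos]), ?_⟩
  intro a b hab
  set δ := min (δ'/2) (S.eps/2) with hδdef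
  have hδ2 : δ ≤ S.eps/2 := min_le_right _ _
  have hδeps : δ ≤ S.eps := by linarith [S.eps_pos]
  have h0 : dist a b ≤ δ := by simpa using hab 0
  have h0e : dist a b ≤ S.eps := le_trans h0 hδeps
  set w := S.bracket a b with hw
  have haw : dist a w ≤ S.eps / 2 := by
    have hmem1 : ((a, a) : X × X) ∈ {p : X × X | dist p.1 p.2 ≤ S.eps} := by
      simp [S.eps_pos.le]
    have hmem2 : ((a, b) : X × X) ∈ {p : X × X | dist p.1 p.2 ≤ S.eps} := h0e
    have hdp : dist ((a, a) : X × X) ((a, b) : X × X) < δ' := by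
      rw [Prod.dist_eq]
      simp only [dist_self]
      have h1 : dist a b ≤ δ'/2 := le_trans h0 (min_le_left _ _)
      have : max 0 (dist a b) = dist a b := max_eq_right dist_nonneg
      rw [this]; linarith
    have := hδ' (a, a) hmem1 (a, b) hmem2 hdp
    simpa [S.bracket_self] using this.le
  have hws : w ∈ S.locStable a (S.eps/2) :=
    ⟨haw, S.bracket_eq₁ a a b (by simpa using S.eps_nonneg) h0e h0e⟩
  have hwu : S.bracket w b = w := S.bracket_eq₂ a b b h0e (by simpa using S.eps_nonneg) h0e
  have hdw : ∀ n, dist ((⇑S.phi)^[n] a) ((⇑S.phi)^[n] w) ≤ S.eps / 2 := fun n =>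
    le_trans (S.iter_mem (by linarith [S.eps_pos]) hws n).1
      (by nlinarith [S.pow_lam_le_one n, S.eps_pos])
  have hdwb : ∀ n, dist ((⇑S.phi)^[n] w) ((⇑S.phi)^[n] b) ≤ S.eps := by
    intro n
    calc dist ((⇑S.phi)^[n] w) ((⇑S.phi)^[n] b)
        ≤ dist ((⇑S.phi)^[n] w) ((⇑S.phi)^[n] a) + dist ((⇑S.phi)^[n] a) ((⇑S.phi)^[n] b) :=
          dist_triangle _ _ _
      _ ≤ S.eps/2 + δ := add_le_add (by rw [dist_comm]; exact hdw n) (hab n)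
      _ ≤ S.eps := by linarith
  have hbr : ∀ n, S.bracket ((⇑S.phi)^[n] w) ((⇑S.phi)^[n] b) = (⇑S.phi)^[n] w := by
    intro n
    induction n with
    | zero => simpa using hwu
    | succ n ih =>
      have h2 : dist (S.phi ((⇑S.phi)^[n] w)) (S.phi ((⇑S.phi)^[n] b)) ≤ S.eps := by
        have := hdwb (n+1)
        rwa [Function.iterate_succ_apply', Function.iterate_succ_apply'] at this
      rw [Function.iterate_succ_apply', Function.iterate_succ_apply',
        ← S.bracket_phi _ _ (hdwb n) h2, ih]
  have hback : ∀ n, dist w b ≤ S.lam ^ n * dist ((⇑S.phi)^[n] w) ((⇑S.phi)^[n] b) := by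
    intro n
    induction n with
    | zero => simp
    | succ n ih =>
      have hc := S.contract_u ((⇑S.phi)^[n+1] b) ((⇑S.phi)^[n+1] w) ((⇑S.phi)^[n+1] b)
        (by rw [dist_comm]; exact hdwb (n+1)) (hbr (n+1))
        (by simpa using S.eps_nonneg) (S.bracket_self _)
      have e1 : S.phi.symm ((⇑S.phi)^[n+1] w) = (⇑S.phi)^[n] w := by
        rw [Function.iterate_succ_apply']; exact S.phi.symm_apply_apply _
      have e2 : S.phi.symm ((⇑S.phi)^[n+1] b) = (⇑S.phi)^[n] b := by
        rw [Function.iterate_succ_apply']; exact S.phi.symm_apply_apply _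
      rw [e1, e2] at hc
      calc dist w b ≤ S.lam ^ n * dist ((⇑S.phi)^[n] w) ((⇑S.phi)^[n] b) := ih
        _ ≤ S.lam ^ n * (S.lam * dist ((⇑S.phi)^[n+1] w) ((⇑S.phi)^[n+1] b)) :=
            mul_le_mul_of_nonneg_left hc (S.pow_lam_nonneg n)
        _ = S.lam ^ (n+1) * dist ((⇑S.phi)^[n+1] w) ((⇑S.phi)^[n+1] b) := by ring
  have hlim : Tendsto (fun n : ℕ => S.lam ^ n * S.eps) atTop (𝓝 0) := by
    simpa using (tendsto_pow_atTop_nhds_zero_of_lt_one S.lam_pos.le S.lam_lt_one).mul_const S.eps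
  have hle : dist w b ≤ 0 :=
    ge_of_tendsto hlim (Eventually.of_forall fun n =>
      le_trans (hback n) (mul_le_mul_of_nonneg_left (hdwb n) (S.pow_lam_nonneg n)))
  have : w = b := dist_le_zero.mp hle
  rw [hw] at this
  exact this

lemma isClosed_locStable (S : SmaleSpace X) (a : X) {ε : ℝ} (hε : ε ≤ S.eps) :
    IsClosed (S.locStable a ε) := by
  haveI := S.compact
  have hA : IsClosed {z : X | dist a z ≤ ε} :=
    isClosed_le (continuous_const.dist continuous_id) continuous_const
  have hF : ContinuousOn (fun z : X => (S.bracket a z, z)) {z : X | dist a z ≤ ε} := by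
    refine ContinuousOn.prodMk ?_ continuousOn_id
    exact S.bracket_cont.comp ((continuous_const.prodMk continuous_id).continuousOn)
      (fun z hz => le_trans hz hε)
  have heq : S.locStable a ε =
      {z : X | dist a z ≤ ε} ∩ (fun z : X => (S.bracket a z, z)) ⁻¹' {p : X × X | p.1 = p.2} := by
    ext z
    simp [SmaleSpace.locStable, Set.mem_inter_iff, Set.mem_setOf_eq, Set.mem_preimage]
  rw [heq]
  exact hF.preimage_isClosed_of_isClosed hA (isClosed_eq continuous_fst continuous_snd)

end SmaleSpace

lemma stableEquiv_refl {X : Type} [MetricSpace X] {φ : X → X} (x : X) : StableEquiv φ x x := by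
  simp only [StableEquiv, dist_self]
  exact tendsto_const_nhds

lemma stableEquiv_of_succ {X : Type} [MetricSpace X] {ψ : X ≃ₜ X} {a b : X}
    (h : StableEquiv (⇑ψ) (ψ a) (ψ b)) : StableEquiv (⇑ψ) a b := by
  have h' : Tendsto (fun n : ℕ => dist ((⇑ψ)^[n+1] a) ((⇑ψ)^[n+1] b)) atTop (𝓝 0) := by
    simpa [StableEquiv, Function.iterate_succ_apply] using h
  exact (tendsto_add_atTop_iff_nat 1).mp h'

lemma IsFactorMap.semiconj_iter {Y X : Type} [TopologicalSpace Y] [TopologicalSpace X]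
    {ψ : Y ≃ₜ Y} {φ : X ≃ₜ X} {π : Y → X} (h : IsFactorMap ψ φ π) (y : Y) (n : ℕ) :
    π ((⇑ψ)^[n] y) = (⇑φ)^[n] (π y) := by
  induction n with
  | zero => rfl
  | succ n ih =>
    rw [Function.iterate_succ_apply', Function.iterate_succ_apply', h.semiconj, ih]

/-- An `s`-bijective factor map `π : (Y, ψ) → (X, φ)` is a local homeomorphism
from local stable sets of `Y` to local stable sets of `X`: for every `y` there are
`ε, ε', ε'' > 0` such that `π` restricted to `Y^s(y, ε)` is a homeomorphism (an embedding) onto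
a subset of `X^s(π(y), ε')` containing `X^s(π(y), ε'')`. -/
theorem sbijective_is_local_homeo_on_stable_sets {Y X : Type} [MetricSpace Y] [MetricSpace X]
    (S : SmaleSpace Y) (T : SmaleSpace X) (π : Y → X)
    (hπ : IsSBij S.phi T.phi π) (y : Y) :
    ∃ ε > (0 : ℝ), ∃ ε' > (0 : ℝ), ∃ ε'' > (0 : ℝ),
      Topology.IsEmbedding (fun p : S.locStable y ε => π p.1) ∧
      π '' S.locStable y ε ⊆ T.locStable (π y) ε' ∧
      T.locStable (π y) ε'' ⊆ π '' S.locStable y ε := by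
  classical
  haveI hYc : CompactSpace Y := S.compact
  haveI hXc : CompactSpace X := T.compact
  obtain ⟨δS, hδSpos, hδSeps, hδS⟩ := S.shadow
  obtain ⟨δT, hδTpos, hδTeps, hδT⟩ := T.shadow
  have hUC : UniformContinuous π :=
    CompactSpace.uniformContinuous_of_continuous hπ.toIsFactorMap.continuous
  rw [Metric.uniformContinuous_iff] at hUC
  obtain ⟨δm, hδmpos, hδm⟩ := hUC δT hδTpos
  set ε : ℝ := min δS (δm/2) with hεdef
  have hεpos : 0 < ε := lt_min hδSpos (by positivity)
  have hεeps : ε ≤ S.eps := le_trans (min_le_left _ _) hδSeps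
  have hεδS : ε ≤ δS := min_le_left _ _
  -- Part 2: π maps the local stable set of y into the local stable set of π y.
  have part2 : π '' S.locStable y ε ⊆ T.locStable (π y) δT := by
    rintro _ ⟨z, hz, rfl⟩
    have hiter : ∀ n : ℕ, dist ((⇑T.phi)^[n] (π y)) ((⇑T.phi)^[n] (π z)) ≤ δT := by
      intro n
      have h1 : dist ((⇑S.phi)^[n] y) ((⇑S.phi)^[n] z) < δm := by
        have h0 := (S.iter_mem hεeps hz n).1
        have h2 : S.lam ^ n * ε ≤ ε := by nlinarith [S.pow_lam_le_one n, hεpos.le]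
        have h3 : ε ≤ δm / 2 := min_le_right _ _
        linarith
      have h4 := hδm h1
      rw [hπ.toIsFactorMap.semiconj_iter, hπ.toIsFactorMap.semiconj_iter] at h4
      exact h4.le
    exact ⟨by simpa using hiter 0, hδT _ _ hiter⟩
  -- Part 1: π is injective on the local stable set, hence an embedding by compactness.
  have hinj : Set.InjOn π (S.locStable y ε) := by
    intro z hz z' hz' hzz
    exact (hπ.bij y).injOn (S.stableEquiv_of_locStable hεeps hz)
      (S.stableEquiv_of_locStable hεeps hz') hzz
  have hcomp : IsCompact (S.locStable y ε) := (S.isClosed_locStable y hεeps).isCompact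
  haveI : CompactSpace (S.locStable y ε) := isCompact_iff_compactSpace.mp hcomp
  have hembed : Topology.IsEmbedding (fun p : S.locStable y ε => π p.1) := by
    have hcont : Continuous (fun p : S.locStable y ε => π p.1) :=
      hπ.toIsFactorMap.continuous.comp continuous_subtype_val
    have hinj' : Function.Injective (fun p : S.locStable y ε => π p.1) := by
      rintro ⟨z, hz⟩ ⟨z', hz'⟩ h
      exact Subtype.ext (hinj hz hz' h)
    exact (hcont.isClosedEmbedding hinj').isEmbedding
  -- Part 3: the image contains a small local stable set of π y.
  have part3 : ∃ ε'' > (0:ℝ), T.locStable (π y) ε'' ⊆ π '' S.locStable y ε := by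
    by_contra hcon
    push_neg at hcon
    have hex : ∀ k : ℕ, ∃ x, x ∈ T.locStable (π y) (min δT 1 / ((k : ℝ) + 1)) ∧
        x ∉ π '' S.locStable y ε := by
      intro k
      have hpos : (0:ℝ) < min δT 1 / ((k : ℝ) + 1) := by positivity
      exact Set.not_subset.mp (hcon _ hpos)
    choose x hx hxim using hex
    have hrk : ∀ k : ℕ, min δT 1 / ((k : ℝ) + 1) ≤ T.eps := by
      intro k
      have h1 : min δT 1 / ((k:ℝ)+1) ≤ min δT 1 :=
        div_le_self (le_min hδTpos.le zero_le_one) (by linarith [Nat.cast_nonneg (α := ℝ) k])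
      exact le_trans h1 (le_trans (min_le_left _ _) hδTeps)
    have hxse : ∀ k, StableEquiv (⇑T.phi) (π y) (x k) := fun k =>
      T.stableEquiv_of_locStable (hrk k) (hx k)
    have hz' : ∀ k, ∃ z, StableEquiv (⇑S.phi) y z ∧ π z = x k := by
      intro k
      obtain ⟨z, hz1, hz2⟩ := (hπ.bij y).surjOn (hxse k)
      exact ⟨z, hz1, hz2⟩
    choose z hzse hπz using hz'
    have hznot : ∀ k, z k ∉ S.locStable y ε := fun k hk => hxim k ⟨z k, hk, hπz k⟩
    have hfar : ∀ k, ∃ m, ε < dist ((⇑S.phi)^[m] y) ((⇑S.phi)^[m] (z k)) := by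
      intro k
      by_contra hno
      push_neg at hno
      exact hznot k ⟨by simpa using hno 0, hδS _ _ (fun n => le_trans (hno n) hεδS)⟩
    have hN : ∀ k, ∃ N, ∀ m ≥ N, dist ((⇑S.phi)^[m] y) ((⇑S.phi)^[m] (z k)) < ε := by
      intro k
      exact eventually_atTop.mp ((hzse k).eventually_lt_const hεpos)
    choose N hNs using hN
    let P : ℕ → ℕ → Prop := fun k m => ε < dist ((⇑S.phi)^[m] y) ((⇑S.phi)^[m] (z k))
    let M : ℕ → ℕ := fun k => Nat.findGreatest (P k) (N k)
    have hPM : ∀ k, ε < dist ((⇑S.phi)^[M k] y) ((⇑S.phi)^[M k] (z k)) := by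
      intro k
      obtain ⟨m, hm⟩ := hfar k
      have hmN : m ≤ N k := by
        by_contra hmn
        push_neg at hmn
        exact absurd hm (lt_asymm (hNs k m hmn.le))
      exact Nat.findGreatest_spec (P := P k) hmN hm
    have hMgt : ∀ k m, M k < m → dist ((⇑S.phi)^[m] y) ((⇑S.phi)^[m] (z k)) ≤ ε := by
      intro k m hm
      by_cases hmn : m ≤ N k
      · exact not_lt.mp (Nat.findGreatest_is_greatest hm hmn)
      · push_neg at hmn
        exact (hNs k m hmn.le).le
    obtain ⟨p, -, σ, hσ, hconv⟩ := isCompact_univ.tendsto_subseq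
      (x := fun k => (((⇑S.phi)^[M k] y, (⇑S.phi)^[M k] (z k)) : Y × Y))
      (fun k => Set.mem_univ _)
    -- (i) the limit points are at distance ≥ ε
    have hppos : ε ≤ dist p.1 p.2 := by
      have h1 := ((continuous_fst.dist continuous_snd).tendsto p).comp hconv
      exact ge_of_tendsto h1 (Eventually.of_forall fun k => (hPM (σ k)).le)
    -- (ii) all strictly forward iterates of the limit points are ε-close
    have hpj : ∀ j : ℕ, dist ((⇑S.phi)^[j+1] p.1) ((⇑S.phi)^[j+1] p.2) ≤ ε := by
      intro j
      have hφc : Continuous ((⇑S.phi)^[j+1] : Y → Y) := S.phi.continuous.iterate _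
      have hc2 : Continuous (fun q : Y × Y => dist ((⇑S.phi)^[j+1] q.1) ((⇑S.phi)^[j+1] q.2)) :=
        (hφc.comp continuous_fst).dist (hφc.comp continuous_snd)
      have h1 := (hc2.tendsto p).comp hconv
      refine le_of_tendsto h1 (Eventually.of_forall fun k => ?_)
      show dist ((⇑S.phi)^[j+1] ((⇑S.phi)^[M (σ k)] y))
        ((⇑S.phi)^[j+1] ((⇑S.phi)^[M (σ k)] (z (σ k)))) ≤ ε
      rw [← Function.iterate_add_apply, ← Function.iterate_add_apply]
      exact hMgt (σ k) (j+1+M (σ k)) (by omega)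
    -- (iii) the limit points have the same image
    have hπp : π p.1 = π p.2 := by
      have hc : Continuous (fun q : Y × Y => dist (π q.1) (π q.2)) :=
        (hπ.toIsFactorMap.continuous.comp continuous_fst).dist
          (hπ.toIsFactorMap.continuous.comp continuous_snd)
      have h1 := (hc.tendsto p).comp hconv
      have h2 : Tendsto (fun k : ℕ => 1 / ((σ k : ℝ) + 1)) atTop (𝓝 0) :=
        tendsto_one_div_add_atTop_nhds_zero_nat.comp hσ.tendsto_atTop
      have hb : ∀ k, dist (π ((⇑S.phi)^[M (σ k)] y)) (π ((⇑S.phi)^[M (σ k)] (z (σ k)))) ≤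
          1 / ((σ k : ℝ) + 1) := by
        intro k
        rw [hπ.toIsFactorMap.semiconj_iter, hπ.toIsFactorMap.semiconj_iter, hπz (σ k)]
        have h3 := (T.iter_mem (hrk (σ k)) (hx (σ k)) (M (σ k))).1
        have hr0 : (0:ℝ) ≤ min δT 1 / ((σ k : ℝ) + 1) := by positivity
        calc dist ((⇑T.phi)^[M (σ k)] (π y)) ((⇑T.phi)^[M (σ k)] (x (σ k)))
            ≤ T.lam ^ (M (σ k)) * (min δT 1 / ((σ k : ℝ) + 1)) := h3
          _ ≤ 1 * (min δT 1 / ((σ k : ℝ) + 1)) :=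
              mul_le_mul_of_nonneg_right (T.pow_lam_le_one _) hr0
          _ = min δT 1 / ((σ k : ℝ) + 1) := one_mul _
          _ ≤ 1 / ((σ k : ℝ) + 1) := by
              gcongr
              exact min_le_right _ _
      have hle : dist (π p.1) (π p.2) ≤ 0 := le_of_tendsto_of_tendsto' h1 h2 hb
      exact dist_le_zero.mp hle
    -- (iv) the limit points are stably equivalent
    have hmem2 : S.phi p.2 ∈ S.locStable (S.phi p.1) ε := by
      refine ⟨by simpa using hpj 0, ?_⟩
      apply hδS
      intro n
      have h5 : dist ((⇑S.phi)^[n] (S.phi p.1)) ((⇑S.phi)^[n] (S.phi p.2)) =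
          dist ((⇑S.phi)^[n+1] p.1) ((⇑S.phi)^[n+1] p.2) := by
        rw [Function.iterate_succ_apply, Function.iterate_succ_apply]
      rw [h5]
      exact le_trans (hpj n) hεδS
    have hse : StableEquiv (⇑S.phi) p.1 p.2 :=
      stableEquiv_of_succ (S.stableEquiv_of_locStable hεeps hmem2)
    have heq : p.1 = p.2 := (hπ.bij p.1).injOn (stableEquiv_refl p.1) hse hπp
    rw [heq, dist_self] at hppos
    linarith
  obtain ⟨ε'', hε''pos, hsub⟩ := part3
  exact ⟨ε, hεpos, δT, hδTpos, ε'', hε''pos, hembed, part2, hsub⟩
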